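/- Define Π_p = (p!)⁻¹ Σ_{j₁,…,j_p} (e^{j₁})⋯(e^{j_p}) P (e_{j_p})⋯(e_{j₁}) for 0 ≤ p ≤ n (with Π₀ = P). Then the Π_p form a complete orthogonal family of idempotents: Σ_{p=0}^{n} Π_p = 1 and Π_p Π_q = δ_{pq} Π_p. -/

import Mathlib

noncomputable section

open CliffordAlgebra

variable (F : Type*) [Field F] (V : Type*) [AddCommGroup V] [Module F V]

/-- The quadratic form `Q[v ⊕ α] = α v` on `W = V ⊕ V*`. -/
def Qf : QuadraticForm F (V × Module.Dual F V) where
  toFun w := w.2 w.1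
  toFun_smul a w := by simp [smul_eq_mul, mul_assoc]
  exists_companion' :=
    ⟨LinearMap.mk₂ F (fun w w' => w.2 w'.1 + w'.2 w.1)
      (fun m m' n => by simp; ring) (fun c m n => by simp; ring)
      (fun m n n' => by simp; ring) (fun c m n => by simp; ring),
     fun w w' => by simp; ring⟩

/-- Image of a vector `v ∈ V` in the Clifford algebra. -/
def ιv (v : V) : CliffordAlgebra (Qf F V) := ι (Qf F V) (v, 0)

/-- Image of a covector `α ∈ V*` in the Clifford algebra. -/
def ιd (α : Module.Dual F V) : CliffordAlgebra (Qf F V) := ι (Qf F V) ((0 : V), α)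

variable {n : ℕ} (bV : Module.Basis (Fin n) F V)

/-- The fundamental idempotent `P = N̄₁⋯N̄ₙ` with `N̄ⱼ = (eⱼ)(eʲ)`. -/
def Pel : CliffordAlgebra (Qf F V) :=
  (List.ofFn fun j : Fin n => ιv F V (bV j) * ιd F V (bV.coord j)).prod

/-- The projector `Π_p = (p!)⁻¹ Σ_{j₁,…,j_p} (e^{j₁})⋯(e^{j_p}) P (e_{j_p})⋯(e_{j₁})`. -/
def Pip (p : ℕ) : CliffordAlgebra (Qf F V) :=
  ((p.factorial : F))⁻¹ •
    ∑ j : Fin p → Fin n,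
      (List.ofFn fun a => ιd F V (bV.coord (j a))).prod * Pel F V bV *
        (List.ofFn fun a => ιv F V (bV (j a))).reverse.prod

/-! ### Auxiliary development -/

section Aux

lemma Qf_apply (w : V × Module.Dual F V) : Qf F V w = w.2 w.1 := rfl

lemma Qf_polar (x y : V × Module.Dual F V) :
    QuadraticMap.polar (Qf F V) x y = x.2 y.1 + y.2 x.1 := by
  simp [QuadraticMap.polar, Qf_apply]
  ring

/-- `a i = eᵢ` in the Clifford algebra. -/
def aEl (i : Fin n) : CliffordAlgebra (Qf F V) := ιv F V (bV i)

/-- `b i = eⁱ` in the Clifford algebra. -/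
def bEl (i : Fin n) : CliffordAlgebra (Qf F V) := ιd F V (bV.coord i)

lemma aa_anti (i j : Fin n) : aEl F V bV i * aEl F V bV j = -(aEl F V bV j * aEl F V bV i) := by
  have h := ι_mul_ι_add_swap (Q := Qf F V) (bV i, 0) (bV j, 0)
  rw [Qf_polar] at h
  simp only [LinearMap.zero_apply, add_zero, map_zero] at h
  exact eq_neg_of_add_eq_zero_left (by simpa [aEl, ιv] using h)

lemma bb_anti (i j : Fin n) : bEl F V bV i * bEl F V bV j = -(bEl F V bV j * bEl F V bV i) := by
  have h := ι_mul_ι_add_swap (Q := Qf F V) ((0 : V), bV.coord i) ((0 : V), bV.coord j)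
  rw [Qf_polar] at h
  simp only [map_zero, add_zero] at h
  exact eq_neg_of_add_eq_zero_left (by simpa [bEl, ιd] using h)

lemma ab_swap (i j : Fin n) :
    aEl F V bV i * bEl F V bV j + bEl F V bV j * aEl F V bV i
      = if i = j then 1 else 0 := by
  have h := ι_mul_ι_add_swap (Q := Qf F V) (bV i, 0) ((0 : V), bV.coord j)
  rw [Qf_polar] at h
  simp only [LinearMap.zero_apply, add_zero] at h
  have hc : bV.coord j (bV i) = if i = j then 1 else 0 := by
    rw [Module.Basis.coord_apply, Module.Basis.repr_self, Finsupp.single_apply]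
  rw [hc] at h
  split_ifs at h with hij
  · simpa [aEl, bEl, ιv, ιd, hij] using h
  · simpa [aEl, bEl, ιv, ιd, hij] using h

lemma ab_anti {i j : Fin n} (hij : i ≠ j) :
    aEl F V bV i * bEl F V bV j = -(bEl F V bV j * aEl F V bV i) := by
  have h := ab_swap F V bV i j
  rw [if_neg hij] at h
  exact eq_neg_of_add_eq_zero_left h

lemma ba_anti {i j : Fin n} (hij : i ≠ j) :
    bEl F V bV i * aEl F V bV j = -(aEl F V bV j * bEl F V bV i) := by
  have h := ab_swap F V bV j i
  rw [if_neg hij.symm] at h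
  exact eq_neg_of_add_eq_zero_left (by rwa [add_comm] at h)

lemma aa_sq (i : Fin n) : aEl F V bV i * aEl F V bV i = 0 := by
  have := ι_sq_scalar (Q := Qf F V) (bV i, 0)
  simpa [aEl, ιv, Qf_apply] using this

lemma bb_sq (i : Fin n) : bEl F V bV i * bEl F V bV i = 0 := by
  have := ι_sq_scalar (Q := Qf F V) ((0 : V), bV.coord i)
  simpa [bEl, ιd, Qf_apply] using this

lemma ab_swap_self (i : Fin n) :
    aEl F V bV i * bEl F V bV i + bEl F V bV i * aEl F V bV i = 1 := by
  simpa using ab_swap F V bV i i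

end Aux

section CommLemmas

variable {A : Type*} [Ring A]

lemma comm_of_anti {x z w : A} (hz : x * z = -(z * x)) (hw : x * w = -(w * x)) :
    Commute x (z * w) := by
  show x * (z * w) = z * w * x
  calc x * (z * w) = x * z * w := by rw [mul_assoc]
    _ = -(z * x) * w := by rw [hz]
    _ = -(z * (x * w)) := by rw [neg_mul, mul_assoc]
    _ = -(z * -(w * x)) := by rw [hw]
    _ = z * (w * x) := by rw [mul_neg, neg_neg]
    _ = z * w * x := by rw [mul_assoc]

lemma comm_of_anti4 {u v x y : A} (hux : u * x = -(x * u)) (huy : u * y = -(y * u))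
    (hvx : v * x = -(x * v)) (hvy : v * y = -(y * v)) :
    Commute (u * v) (x * y) :=
  ((comm_of_anti hux huy).mul_left (comm_of_anti hvx hvy))

lemma prodmul : ∀ {m : ℕ} (f g : Fin m → A),
    (∀ i j, i ≠ j → Commute (f i) (g j)) →
    (List.ofFn f).prod * (List.ofFn g).prod = (List.ofFn fun i => f i * g i).prod := by
  intro m
  induction m with
  | zero => intro f g _; simp
  | succ m ih =>
    intro f g h
    simp only [List.ofFn_succ, List.prod_cons]
    have hc : Commute (g 0) ((List.ofFn fun i : Fin m => f i.succ).prod) := by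
      apply Commute.list_prod_right
      intro x hx
      rw [List.mem_ofFn] at hx
      obtain ⟨i, rfl⟩ := hx
      exact (h i.succ 0 (Fin.succ_ne_zero i)).symm
    have key : (List.ofFn fun i : Fin m => f i.succ).prod *
          (g 0 * (List.ofFn fun i : Fin m => g i.succ).prod)
        = g 0 * ((List.ofFn fun i : Fin m => f i.succ).prod *
            (List.ofFn fun i : Fin m => g i.succ).prod) := by
      rw [← mul_assoc, ← hc.eq, mul_assoc]
    rw [mul_assoc, key, ← mul_assoc,
      ih _ _ (fun i j hij => h i.succ j.succ (fun hh => hij (Fin.succ_injective _ hh)))]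

lemma prodmul3 {m : ℕ} (f g h : Fin m → A)
    (hfg : ∀ i j, i ≠ j → Commute (f i) (g j))
    (hfh : ∀ i j, i ≠ j → Commute (f i) (h j))
    (hgh : ∀ i j, i ≠ j → Commute (g i) (h j)) :
    (List.ofFn f).prod * (List.ofFn g).prod * (List.ofFn h).prod
      = (List.ofFn fun i => f i * g i * h i).prod := by
  rw [prodmul f g hfg, prodmul _ h
    (fun i j hij => ((hfh i j hij).mul_left (hgh i j hij)))]

lemma prod_single : ∀ {m : ℕ} (k : Fin m) (x : A),
    (List.ofFn fun i => if i = k then x else 1).prod = x := by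
  intro m
  induction m with
  | zero => exact fun k => k.elim0
  | succ m ih =>
    intro k x
    induction k using Fin.cases with
    | zero =>
      have h1 : (List.ofFn fun i : Fin m => if i.succ = (0 : Fin (m+1)) then x else 1).prod = 1 := by
        apply List.prod_eq_one
        intro y hy
        rw [List.mem_ofFn] at hy
        obtain ⟨i, rfl⟩ := hy
        simp [Fin.succ_ne_zero]
      rw [List.ofFn_succ, List.prod_cons, if_pos rfl, h1, mul_one]
    | succ k' =>
      simp only [List.ofFn_succ, List.prod_cons]
      rw [if_neg (by simp [(Fin.succ_ne_zero k').symm]), one_mul]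
      have : (List.ofFn fun i : Fin m => if i.succ = k'.succ then x else 1)
          = (List.ofFn fun i : Fin m => if i = k' then x else 1) := by
        congr 1
        funext i
        simp [Fin.succ_inj]
      rw [this, ih]

end CommLemmas

section Blocks

/-- Per-mode block: `bᵢaᵢ` if `i ∈ T`, else `aᵢbᵢ`. -/
def cEl (T : Finset (Fin n)) (i : Fin n) : CliffordAlgebra (Qf F V) :=
  if i ∈ T then bEl F V bV i * aEl F V bV i else aEl F V bV i * bEl F V bV i

/-- The product of all mode blocks determined by `T`. -/
def tEl (T : Finset (Fin n)) : CliffordAlgebra (Qf F V) :=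
  (List.ofFn fun i => cEl F V bV T i).prod

lemma comm_a_c {i j : Fin n} (hij : i ≠ j) (T : Finset (Fin n)) :
    Commute (aEl F V bV i) (cEl F V bV T j) := by
  unfold cEl
  split_ifs
  · exact comm_of_anti (ab_anti F V bV hij) (aa_anti F V bV i j)
  · exact comm_of_anti (aa_anti F V bV i j) (ab_anti F V bV hij)

lemma comm_b_c {i j : Fin n} (hij : i ≠ j) (T : Finset (Fin n)) :
    Commute (bEl F V bV i) (cEl F V bV T j) := by
  unfold cEl
  split_ifs
  · exact comm_of_anti (bb_anti F V bV i j) (ba_anti F V bV hij)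
  · exact comm_of_anti (ba_anti F V bV hij) (bb_anti F V bV i j)

lemma comm_c_c {i j : Fin n} (hij : i ≠ j) (T U : Finset (Fin n)) :
    Commute (cEl F V bV T i) (cEl F V bV U j) := by
  show Commute (cEl F V bV T i) (cEl F V bV U j)
  conv_lhs => rw [cEl]
  split_ifs
  · exact (comm_b_c F V bV hij U).mul_left (comm_a_c F V bV hij U)
  · exact (comm_a_c F V bV hij U).mul_left (comm_b_c F V bV hij U)

lemma ba_idem (i : Fin n) :
    (bEl F V bV i * aEl F V bV i) * (bEl F V bV i * aEl F V bV i)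
      = bEl F V bV i * aEl F V bV i := by
  have h : aEl F V bV i * bEl F V bV i = 1 - bEl F V bV i * aEl F V bV i := by
    rw [eq_sub_iff_add_eq]; exact ab_swap_self F V bV i
  calc (bEl F V bV i * aEl F V bV i) * (bEl F V bV i * aEl F V bV i)
      = bEl F V bV i * (aEl F V bV i * bEl F V bV i) * aEl F V bV i := by
        rw [mul_assoc, mul_assoc, mul_assoc]
    _ = bEl F V bV i * (1 - bEl F V bV i * aEl F V bV i) * aEl F V bV i := by rw [h]
    _ = bEl F V bV i * aEl F V bV i
        - bEl F V bV i * bEl F V bV i * (aEl F V bV i * aEl F V bV i) := by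
        rw [mul_sub, sub_mul, mul_one]
        rw [mul_assoc, mul_assoc, mul_assoc]
    _ = bEl F V bV i * aEl F V bV i := by rw [bb_sq, zero_mul, sub_zero]

lemma ab_idem (i : Fin n) :
    (aEl F V bV i * bEl F V bV i) * (aEl F V bV i * bEl F V bV i)
      = aEl F V bV i * bEl F V bV i := by
  have h : bEl F V bV i * aEl F V bV i = 1 - aEl F V bV i * bEl F V bV i := by
    rw [eq_sub_iff_add_eq, add_comm]; exact ab_swap_self F V bV i
  calc (aEl F V bV i * bEl F V bV i) * (aEl F V bV i * bEl F V bV i)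
      = aEl F V bV i * (bEl F V bV i * aEl F V bV i) * bEl F V bV i := by
        rw [mul_assoc, mul_assoc, mul_assoc]
    _ = aEl F V bV i * (1 - aEl F V bV i * bEl F V bV i) * bEl F V bV i := by rw [h]
    _ = aEl F V bV i * bEl F V bV i
        - aEl F V bV i * aEl F V bV i * (bEl F V bV i * bEl F V bV i) := by
        rw [mul_sub, sub_mul, mul_one]
        rw [mul_assoc, mul_assoc, mul_assoc]
    _ = aEl F V bV i * bEl F V bV i := by rw [aa_sq, zero_mul, sub_zero]

lemma ba_ab_zero (i : Fin n) :
    (bEl F V bV i * aEl F V bV i) * (aEl F V bV i * bEl F V bV i) = 0 := by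
  calc (bEl F V bV i * aEl F V bV i) * (aEl F V bV i * bEl F V bV i)
      = bEl F V bV i * (aEl F V bV i * aEl F V bV i) * bEl F V bV i := by
        rw [mul_assoc, mul_assoc, mul_assoc]
    _ = 0 := by rw [aa_sq, mul_zero, zero_mul]

lemma ab_ba_zero (i : Fin n) :
    (aEl F V bV i * bEl F V bV i) * (bEl F V bV i * aEl F V bV i) = 0 := by
  calc (aEl F V bV i * bEl F V bV i) * (bEl F V bV i * aEl F V bV i)
      = aEl F V bV i * (bEl F V bV i * bEl F V bV i) * aEl F V bV i := by
        rw [mul_assoc, mul_assoc, mul_assoc]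
    _ = 0 := by rw [bb_sq, mul_zero, zero_mul]

lemma cc_mul_cc (T U : Finset (Fin n)) (i : Fin n) :
    cEl F V bV T i * cEl F V bV U i
      = if (i ∈ T ↔ i ∈ U) then cEl F V bV T i else 0 := by
  unfold cEl
  by_cases hT : i ∈ T <;> by_cases hU : i ∈ U <;>
    simp only [hT, hU, if_pos, if_neg, if_true, if_false, iff_true, iff_false,
      not_true, not_false_iff] <;>
    first
      | exact ba_idem F V bV i
      | exact ab_idem F V bV i
      | exact ba_ab_zero F V bV i
      | exact ab_ba_zero F V bV i

lemma tt_mul_tt (T U : Finset (Fin n)) :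
    tEl F V bV T * tEl F V bV U = if T = U then tEl F V bV T else 0 := by
  unfold tEl
  rw [prodmul _ _ (fun i j hij => comm_c_c F V bV hij T U)]
  by_cases hTU : T = U
  · subst hTU
    rw [if_pos rfl]
    have he : (fun i => cEl F V bV T i * cEl F V bV T i) = fun i => cEl F V bV T i :=
      funext fun i => by rw [cc_mul_cc, if_pos Iff.rfl]
    rw [he]
  · rw [if_neg hTU]
    have : ∃ i, ¬ (i ∈ T ↔ i ∈ U) := by
      by_contra hcon
      push_neg at hcon
      exact hTU (Finset.ext fun i => hcon i)
    obtain ⟨i, hi⟩ := this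
    apply List.prod_eq_zero
    rw [List.mem_ofFn]
    refine ⟨i, ?_⟩
    show cEl F V bV T i * cEl F V bV U i = 0
    rw [cc_mul_cc, if_neg hi]

end Blocks

section Rec

lemma bta (k : Fin n) (T : Finset (Fin n)) :
    bEl F V bV k * tEl F V bV T * aEl F V bV k
      = if k ∈ T then 0 else tEl F V bV (insert k T) := by
  have h1 : (List.ofFn fun i : Fin n => if i = k then bEl F V bV k else 1).prod
      = bEl F V bV k := prod_single k _
  have h3 : (List.ofFn fun i : Fin n => if i = k then aEl F V bV k else 1).prod
      = aEl F V bV k := prod_single k _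
  rw [← h1, ← h3]
  unfold tEl
  rw [prodmul3 _ _ _ ?hfg ?hfh ?hgh]
  case hfg =>
    intro i j hij
    by_cases hik : i = k
    · subst hik; rw [if_pos rfl]; exact comm_b_c F V bV hij T
    · rw [if_neg hik]; exact Commute.one_left _
  case hfh =>
    intro i j hij
    by_cases hjk : j = k
    · rw [if_neg (fun hik : i = k => hij (hik.trans hjk.symm))]
      exact Commute.one_left _
    · rw [if_neg hjk]; exact Commute.one_right _
  case hgh =>
    intro i j hij
    by_cases hjk : j = k
    · subst hjk
      rw [if_pos rfl]
      exact ((comm_a_c F V bV (Ne.symm hij) T).symm)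
    · rw [if_neg hjk]; exact Commute.one_right _
  by_cases hk : k ∈ T
  · rw [if_pos hk]
    apply List.prod_eq_zero
    rw [List.mem_ofFn]
    refine ⟨k, ?_⟩
    show (if k = k then bEl F V bV k else 1) * cEl F V bV T k *
      (if k = k then aEl F V bV k else 1) = 0
    rw [if_pos rfl, if_pos rfl]
    unfold cEl
    rw [if_pos hk]
    calc bEl F V bV k * (bEl F V bV k * aEl F V bV k) * aEl F V bV k
        = (bEl F V bV k * bEl F V bV k) * (aEl F V bV k * aEl F V bV k) := by
          rw [mul_assoc, mul_assoc, mul_assoc]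
      _ = 0 := by rw [bb_sq, zero_mul]
  · rw [if_neg hk]
    have he : (fun i => (if i = k then bEl F V bV k else 1) * cEl F V bV T i *
        (if i = k then aEl F V bV k else 1)) = fun i => cEl F V bV (insert k T) i := by
      funext i
      by_cases hik : i = k
      · subst hik
        rw [if_pos rfl, if_pos rfl]
        unfold cEl
        rw [if_neg hk, if_pos (Finset.mem_insert_self i T)]
        calc bEl F V bV i * (aEl F V bV i * bEl F V bV i) * aEl F V bV i
            = (bEl F V bV i * aEl F V bV i) * (bEl F V bV i * aEl F V bV i) := by
              rw [mul_assoc, mul_assoc, mul_assoc]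
          _ = bEl F V bV i * aEl F V bV i := ba_idem F V bV i
      · rw [if_neg hik, if_neg hik, one_mul, mul_one]
        unfold cEl
        exact if_congr (by simp [Finset.mem_insert, hik]) rfl rfl
    rw [he]

end Rec

section Strings

lemma strings : ∀ {p : ℕ} (j : Fin p → Fin n) (T : Finset (Fin n)),
    (List.ofFn fun t => bEl F V bV (j t)).prod * tEl F V bV T *
        (List.ofFn fun t => aEl F V bV (j t)).reverse.prod
      = if Function.Injective j ∧ ∀ t, j t ∉ T
          then tEl F V bV (T ∪ Finset.image j Finset.univ) else 0 := by
  intro p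
  induction p with
  | zero =>
    intro j T
    rw [if_pos ⟨fun a => a.elim0, fun t => t.elim0⟩]
    simp
  | succ p ih =>
    intro j T
    set k := j (Fin.last p) with hk
    set j' : Fin p → Fin n := fun t => j t.castSucc with hj'
    have hB : (List.ofFn fun t => bEl F V bV (j t)).prod
        = (List.ofFn fun t => bEl F V bV (j' t)).prod * bEl F V bV k := by
      rw [List.ofFn_succ' (fun t => bEl F V bV (j t)), List.prod_concat]
    have hA : (List.ofFn fun t => aEl F V bV (j t)).reverse.prod
        = aEl F V bV k * (List.ofFn fun t => aEl F V bV (j' t)).reverse.prod := by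
      rw [List.ofFn_succ' (fun t => aEl F V bV (j t)), List.concat_eq_append,
        List.reverse_append, List.reverse_singleton, List.singleton_append, List.prod_cons]
    rw [hB, hA]
    have hmid : (List.ofFn fun t => bEl F V bV (j' t)).prod * bEl F V bV k *
          tEl F V bV T * (aEl F V bV k *
            (List.ofFn fun t => aEl F V bV (j' t)).reverse.prod)
        = (List.ofFn fun t => bEl F V bV (j' t)).prod *
            (bEl F V bV k * tEl F V bV T * aEl F V bV k) *
            (List.ofFn fun t => aEl F V bV (j' t)).reverse.prod := by
      simp only [mul_assoc]
    rw [hmid, bta]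
    by_cases hkT : k ∈ T
    · rw [if_pos hkT, mul_zero, zero_mul,
        if_neg (fun hc => hc.2 (Fin.last p) hkT)]
    · rw [if_neg hkT, ih]
      have hiff : (Function.Injective j' ∧ ∀ t, j' t ∉ insert k T)
          ↔ (Function.Injective j ∧ ∀ t, j t ∉ T) := by
        constructor
        · rintro ⟨hinj, hnot⟩
          constructor
          · intro s t hst
            rcases Fin.eq_castSucc_or_eq_last s with ⟨s', rfl⟩ | rfl <;>
              rcases Fin.eq_castSucc_or_eq_last t with ⟨t', rfl⟩ | rfl
            · exact congrArg Fin.castSucc (hinj hst)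
            · exact absurd hst
                (fun h : j' s' = k => (hnot s') (h ▸ Finset.mem_insert_self k T))
            · exact absurd hst.symm
                (fun h : j' t' = k => (hnot t') (h ▸ Finset.mem_insert_self k T))
            · rfl
          · intro t
            rcases Fin.eq_castSucc_or_eq_last t with ⟨t', rfl⟩ | rfl
            · have := hnot t'
              rw [Finset.mem_insert] at this
              push_neg at this
              exact this.2
            · exact hkT
        · rintro ⟨hinj, hnot⟩
          constructor
          · intro s t hst
            exact Fin.castSucc_injective p (hinj hst)
          · intro t
            rw [Finset.mem_insert]
            push_neg
            refine ⟨?_, hnot t.castSucc⟩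
            intro hc
            exact absurd (hinj hc) (Fin.ne_last_of_lt (Fin.castSucc_lt_last t))
      have hset : insert k T ∪ Finset.image j' Finset.univ
          = T ∪ Finset.image j Finset.univ := by
        ext x
        simp only [Finset.mem_union, Finset.mem_insert, Finset.mem_image,
          Finset.mem_univ, true_and]
        constructor
        · rintro ((rfl | hT) | ⟨t, rfl⟩)
          · exact Or.inr ⟨Fin.last p, rfl⟩
          · exact Or.inl hT
          · exact Or.inr ⟨t.castSucc, rfl⟩
        · rintro (hT | ⟨t, rfl⟩)
          · exact Or.inl (Or.inr hT)
          · rcases Fin.eq_castSucc_or_eq_last t with ⟨t', rfl⟩ | rfl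
            · exact Or.inr ⟨t', rfl⟩
            · exact Or.inl (Or.inl rfl)
      rw [hset]
      exact if_congr hiff rfl rfl

end Strings

section Expand

lemma expand_prod {A : Type*} [Ring A] : ∀ {m : ℕ} (f g : Fin m → A),
    ∑ ε : Fin m → Bool, (List.ofFn fun i => if ε i then f i else g i).prod
      = (List.ofFn fun i => f i + g i).prod := by
  intro m
  induction m with
  | zero =>
    intro f g
    simp
  | succ m ih =>
    intro f g
    rw [← (Fin.consEquiv (fun _ : Fin (m+1) => Bool)).sum_comp
      (fun ε => (List.ofFn fun i => if ε i then f i else g i).prod)]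
    rw [Fintype.sum_prod_type]
    have hsplit : ∀ (x : Bool) (ε' : Fin m → Bool),
        (List.ofFn fun i => if (Fin.consEquiv (fun _ : Fin (m+1) => Bool)) (x, ε') i then f i else g i).prod
          = (if x then f 0 else g 0) *
            (List.ofFn fun i : Fin m => if ε' i then f i.succ else g i.succ).prod := by
      intro x ε'
      have h0 : ((Fin.consEquiv (fun _ : Fin (m+1) => Bool)) (x, ε') 0 : Bool) = x := by
        simp [Fin.consEquiv]
      have hfun : (fun i : Fin m =>
            if (Fin.consEquiv (fun _ : Fin (m+1) => Bool)) (x, ε') i.succ then f i.succ else g i.succ)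
          = fun i : Fin m => if ε' i then f i.succ else g i.succ := by
        funext i
        have hs : ((Fin.consEquiv (fun _ : Fin (m+1) => Bool)) (x, ε') i.succ : Bool) = ε' i := by
          simp [Fin.consEquiv]
        rw [hs]
      rw [List.ofFn_succ, List.prod_cons, h0, hfun]
    calc ∑ x : Bool, ∑ ε' : Fin m → Bool,
          (List.ofFn fun i => if (Fin.consEquiv (fun _ : Fin (m+1) => Bool)) (x, ε') i then f i else g i).prod
        = ∑ x : Bool, (if x then f 0 else g 0) *
            ∑ ε' : Fin m → Bool,
              (List.ofFn fun i : Fin m => if ε' i then f i.succ else g i.succ).prod := by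
          refine Finset.sum_congr rfl fun x _ => ?_
          rw [Finset.mul_sum]
          exact Finset.sum_congr rfl fun ε' _ => hsplit x ε'
      _ = (f 0 + g 0) * (List.ofFn fun i : Fin m => f i.succ + g i.succ).prod := by
          rw [Fintype.sum_bool, ih]
          rw [if_pos (by trivial), if_neg (by simp)]
          rw [← add_mul]
      _ = (List.ofFn fun i => f i + g i).prod := by
          rw [List.ofFn_succ, List.prod_cons]

lemma sum_tEl : ∑ T : Finset (Fin n), tEl F V bV T = 1 := by
  have hbij : Function.Bijective
      (fun ε : Fin n → Bool => Finset.univ.filter (fun i => ε i)) := by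
    constructor
    · intro ε ε' h
      funext i
      have := Finset.ext_iff.mp h i
      simpa using this
    · intro T
      refine ⟨fun i => i ∈ T, ?_⟩
      ext i
      simp
  rw [← Function.Bijective.sum_comp hbij (fun T => tEl F V bV T)]
  have he : ∀ ε : Fin n → Bool,
      tEl F V bV (Finset.univ.filter (fun i => ε i))
        = (List.ofFn fun i => if ε i then bEl F V bV i * aEl F V bV i
            else aEl F V bV i * bEl F V bV i).prod := by
    intro ε
    unfold tEl
    have hfun : (fun i => cEl F V bV (Finset.univ.filter (fun i => ε i)) i)
        = fun i => if ε i then bEl F V bV i * aEl F V bV i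
            else aEl F V bV i * bEl F V bV i := by
      funext i
      unfold cEl
      exact if_congr (by simp) rfl rfl
    rw [hfun]
  calc ∑ ε : Fin n → Bool, tEl F V bV (Finset.univ.filter (fun i => ε i))
      = ∑ ε : Fin n → Bool, (List.ofFn fun i => if ε i then bEl F V bV i * aEl F V bV i
          else aEl F V bV i * bEl F V bV i).prod :=
        Finset.sum_congr rfl fun ε _ => he ε
    _ = (List.ofFn fun i => bEl F V bV i * aEl F V bV i + aEl F V bV i * bEl F V bV i).prod :=
        expand_prod _ _
    _ = (List.ofFn fun _ : Fin n => (1 : CliffordAlgebra (Qf F V))).prod := by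
        have hfun : (fun i => bEl F V bV i * aEl F V bV i + aEl F V bV i * bEl F V bV i)
            = fun _ : Fin n => (1 : CliffordAlgebra (Qf F V)) := by
          funext i
          rw [add_comm]
          exact ab_swap_self F V bV i
        rw [hfun]
    _ = 1 := by
        apply List.prod_eq_one
        intro y hy
        rw [List.mem_ofFn] at hy
        obtain ⟨i, rfl⟩ := hy
        rfl

end Expand

section Counting

lemma image_filter_inj (p : ℕ) :
    ((Finset.univ : Finset (Fin p → Fin n)).filter Function.Injective).image
        (fun j => Finset.image j Finset.univ)
      = Finset.powersetCard p Finset.univ := by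
  ext T
  simp only [Finset.mem_image, Finset.mem_filter, Finset.mem_univ, true_and,
    Finset.mem_powersetCard]
  constructor
  · rintro ⟨j, hj, rfl⟩
    refine ⟨Finset.subset_univ _, ?_⟩
    rw [Finset.card_image_of_injective _ hj, Finset.card_univ, Fintype.card_fin]
  · rintro ⟨-, hT⟩
    refine ⟨fun t => (T.orderIsoOfFin hT t : Fin n), ?_, ?_⟩
    · intro s t hst
      exact (T.orderIsoOfFin hT).injective (Subtype.val_injective hst)
    · apply Finset.eq_of_subset_of_card_le
      · intro x hx
        rw [Finset.mem_image] at hx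
        obtain ⟨t, -, rfl⟩ := hx
        exact (T.orderIsoOfFin hT t).2
      · rw [Finset.card_image_of_injective _
          (fun s t hst => (T.orderIsoOfFin hT).injective (Subtype.val_injective hst)),
          Finset.card_univ, Fintype.card_fin, hT]

lemma card_fiber (p : ℕ) (T : Finset (Fin n)) (hT : T.card = p) :
    (((Finset.univ : Finset (Fin p → Fin n)).filter Function.Injective).filter
        (fun j => Finset.image j Finset.univ = T)).card = p.factorial := by
  have hinj2 : ∀ e : Fin p ↪ T, Function.Injective (fun t => (e t : Fin n)) :=
    fun e s t hst => e.injective (Subtype.val_injective hst)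
  have himg : ∀ e : Fin p ↪ T, Finset.image (fun t => (e t : Fin n)) Finset.univ = T := by
    intro e
    apply Finset.eq_of_subset_of_card_le
    · intro x hx
      rw [Finset.mem_image] at hx
      obtain ⟨t, -, rfl⟩ := hx
      exact (e t).2
    · rw [Finset.card_image_of_injective _ (hinj2 e), Finset.card_univ, Fintype.card_fin, hT]
  have : (((Finset.univ : Finset (Fin p → Fin n)).filter Function.Injective).filter
        (fun j => Finset.image j Finset.univ = T)).card
      = Fintype.card (Fin p ↪ T) := by
    rw [← Fintype.card_coe]
    exact Fintype.card_congr
      { toFun := fun jj =>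
          ⟨fun t => ⟨jj.1 t, by
              have hj := jj.2
              rw [Finset.mem_filter] at hj
              have hm := Finset.mem_image_of_mem jj.1 (Finset.mem_univ t)
              rw [hj.2] at hm
              exact hm⟩,
            by
              intro s t hst
              have hj := jj.2
              rw [Finset.mem_filter, Finset.mem_filter] at hj
              exact hj.1.2 (congrArg Subtype.val hst)⟩
        invFun := fun e => ⟨fun t => (e t : Fin n), by
              rw [Finset.mem_filter, Finset.mem_filter]
              exact ⟨⟨Finset.mem_univ _, hinj2 e⟩, himg e⟩⟩
        left_inv := fun jj => Subtype.ext rfl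
        right_inv := fun e => DFunLike.ext _ _ fun t => Subtype.ext rfl }
  rw [this, Fintype.card_embedding_eq, Fintype.card_coe, hT,
    Fintype.card_fin, Nat.descFactorial_self]

lemma pip_eq [CharZero F] (p : ℕ) :
    Pip F V bV p = ∑ T ∈ Finset.powersetCard p Finset.univ, tEl F V bV T := by
  have hPel : Pel F V bV = tEl F V bV ∅ := by
    unfold Pel tEl
    have hfun : (fun j : Fin n => ιv F V (bV j) * ιd F V (bV.coord j))
        = fun i => cEl F V bV ∅ i := by
      funext i
      unfold cEl
      rw [if_neg (Finset.notMem_empty i)]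
      rfl
    rw [hfun]
  unfold Pip
  rw [hPel]
  have h1 : ∀ j : Fin p → Fin n,
      (List.ofFn fun a => ιd F V (bV.coord (j a))).prod * tEl F V bV ∅ *
          (List.ofFn fun a => ιv F V (bV (j a))).reverse.prod
        = if Function.Injective j then tEl F V bV (Finset.image j Finset.univ) else 0 := by
    intro j
    have h := strings F V bV j ∅
    rw [if_congr (and_iff_left (fun t => Finset.notMem_empty (j t))) rfl rfl,
      Finset.empty_union] at h
    exact h
  rw [Finset.sum_congr rfl (fun j _ => h1 j)]
  rw [← Finset.sum_filter]
  rw [Finset.sum_comp (tEl F V bV) (fun j => Finset.image j Finset.univ)]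
  rw [image_filter_inj]
  have h2 : ∀ T ∈ Finset.powersetCard p (Finset.univ : Finset (Fin n)),
      (Finset.filter (fun j : Fin p → Fin n => Finset.image j Finset.univ = T)
          (Finset.filter Function.Injective Finset.univ)).card • tEl F V bV T
        = p.factorial • tEl F V bV T := by
    intro T hT
    rw [Finset.mem_powersetCard] at hT
    rw [card_fiber p T hT.2]
  rw [Finset.sum_congr rfl h2, Finset.smul_sum]
  refine Finset.sum_congr rfl fun T _ => ?_
  rw [← Nat.cast_smul_eq_nsmul F (p.factorial), inv_smul_smul₀]
  exact Nat.cast_ne_zero.mpr (Nat.factorial_ne_zero p)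

end Counting

/-- the `Π_p`, `0 ≤ p ≤ n`, form a complete orthogonal family of
idempotents: `Σ_{p=0}^n Π_p = 1` and `Π_p Π_q = δ_{pq} Π_p`. -/
theorem stmt18 [CharZero F] :
    (∑ p ∈ Finset.range (n + 1), Pip F V bV p = 1) ∧
    (∀ p q : ℕ, Pip F V bV p * Pip F V bV q =
      if p = q then Pip F V bV p else 0) := by
  constructor
  · calc ∑ p ∈ Finset.range (n + 1), Pip F V bV p
        = ∑ p ∈ Finset.range (n + 1), ∑ T ∈ Finset.powersetCard p Finset.univ,
            tEl F V bV T := Finset.sum_congr rfl fun p _ => pip_eq F V bV p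
      _ = ∑ T ∈ (Finset.univ : Finset (Fin n)).powerset, tEl F V bV T := by
          rw [Finset.sum_powerset, Finset.card_univ, Fintype.card_fin]
      _ = ∑ T : Finset (Fin n), tEl F V bV T := by rw [Finset.powerset_univ]
      _ = 1 := sum_tEl F V bV
  · intro p q
    rw [pip_eq F V bV p, pip_eq F V bV q, Finset.sum_mul_sum]
    have hinner : ∀ T ∈ Finset.powersetCard p (Finset.univ : Finset (Fin n)),
        ∑ U ∈ Finset.powersetCard q Finset.univ, tEl F V bV T * tEl F V bV U
          = if T ∈ Finset.powersetCard q (Finset.univ : Finset (Fin n))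
              then tEl F V bV T else 0 := by
      intro T _
      rw [Finset.sum_congr rfl (fun U _ => tt_mul_tt F V bV T U)]
      exact Finset.sum_ite_eq (Finset.powersetCard q Finset.univ) T (fun _ => tEl F V bV T)
    rw [Finset.sum_congr rfl hinner]
    by_cases hpq : p = q
    · subst hpq
      rw [if_pos rfl]
      exact Finset.sum_congr rfl fun T hT => if_pos hT
    · rw [if_neg hpq]
      apply Finset.sum_eq_zero
      intro T hT
      rw [Finset.mem_powersetCard] at hT
      rw [if_neg]
      rw [Finset.mem_powersetCard]
      rintro ⟨-, hcard⟩
      exact hpq (hT.2.symm.trans hcard)
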